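/- Let X ⊆ A^{Σ*} be an irreducible sofic tree shift and let 𝒜 be a minimal co-deterministic presentation of X, i.e. a co-deterministic unrestricted Rabin automaton with Sh_𝒜 = X having fewest states among all co-deterministic unrestricted Rabin automata accepting X. Then 𝒜 is strongly connected. -/

import Mathlib

/-! Common definitions: configurations over the regular rooted tree `Σ*`
(words = `List Sg`), the shift action, tree shifts, blocks, shifts of finite
type, cellular automata, sofic tree shifts, unrestricted Rabin automata. -/

/-- The shift action: `f^w (w') = f (w ++ w')`. -/
def shiftMap {Sg A : Type} (f : List Sg → A) (w : List Sg) : List Sg → A :=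
  fun w' => f (w ++ w')

/-- The orbit `{f^w : w ∈ Σ*}` of a configuration under the shift action. -/
def shiftOrbit {Sg A : Type} (f : List Sg → A) : Set (List Sg → A) :=
  Set.range (shiftMap f)

/-- A configuration is regular if its orbit under the shift action is finite. -/
def IsRegularConfig {Sg A : Type} (f : List Sg → A) : Prop :=
  (shiftOrbit f).Finite

/-- A tree shift: a subset of `A^{Σ*}` that is closed in the prodiscrete
topology and invariant under the shift action. -/
def IsTreeShift {Sg A : Type} [TopologicalSpace A] (X : Set (List Sg → A)) : Prop :=
  IsClosed X ∧ ∀ f ∈ X, ∀ w : List Sg, shiftMap f w ∈ X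

/-- A block of size `n + 1`: a map `Δ_{n+1} → A`, where `Δ_k` is the set of
words of length `< k` (so blocks have size `≥ 1`). -/
def TreeBlock (Sg A : Type) : Type :=
  (n : ℕ) × ({w : List Sg // w.length < n + 1} → A)

/-- The restriction of `f^w` to `Δ_{n+1}`, viewed as a block. -/
def blockAt {Sg A : Type} (f : List Sg → A) (w : List Sg) (n : ℕ) : TreeBlock Sg A :=
  ⟨n, fun m => f (w ++ m.val)⟩

/-- `X(F)`: the set of configurations avoiding every block in `F`. -/
def avoids {Sg A : Type} (F : Set (TreeBlock Sg A)) : Set (List Sg → A) :=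
  {f | ∀ (w : List Sg) (n : ℕ), blockAt f w n ∉ F}

/-- A tree shift of finite type: `X = X(F)` for some finite set `F` of blocks. -/
def IsSFT {Sg A : Type} (X : Set (List Sg → A)) : Prop :=
  ∃ F : Set (TreeBlock Sg A), F.Finite ∧ X = avoids F

/-- A cellular automaton `τ : X → B^{Σ*}`: there are a finite memory set
`M ⊆ Σ*` and a local map `μ : A^M → B` with `τ(f)(w) = μ((f^w)|_M)`. -/
def IsCellularAutomaton {Sg A B : Type} (X : Set (List Sg → A))
    (τ : X → List Sg → B) : Prop :=
  ∃ (M : Finset (List Sg)) (μ : ({m : List Sg // m ∈ M} → A) → B),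
    ∀ (f : X) (w : List Sg), τ f w = μ (fun m => f.val (w ++ m.val))

/-- A sofic tree shift: the image of a tree shift of finite type under a
cellular automaton. -/
def IsSofic {Sg A : Type} (X : Set (List Sg → A)) : Prop :=
  ∃ (C : Type) (_ : Finite C) (Y : Set (List Sg → C)) (τ : Y → List Sg → A),
    IsSFT Y ∧ IsCellularAutomaton Y τ ∧ X = Set.range τ

/-- An unrestricted Rabin automaton: a nonempty finite state set `S` and a set
of transition bundles `𝒯 ⊆ S × A × S^Σ`. -/
structure URA (Sg A : Type) where
  S : Type
  [finS : Finite S]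
  [neS : Nonempty S]
  T : Set (S × A × (Sg → S))

attribute [instance] URA.finS URA.neS

/-- Acceptance of a configuration by an unrestricted Rabin automaton. -/
def URA.Accepts {Sg A : Type} (𝒜 : URA Sg A) (f : List Sg → A) : Prop :=
  ∃ α : List Sg → 𝒜.S,
    ∀ w : List Sg, (α w, f w, fun σ => α (w ++ [σ])) ∈ 𝒜.T

/-- `Sh_𝒜`: the set of configurations accepted by `𝒜`. -/
def URA.shift {Sg A : Type} (𝒜 : URA Sg A) : Set (List Sg → A) :=
  {f | 𝒜.Accepts f}

/-- `𝒜` is essential if every state is the source of some transition bundle. -/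
def URA.Essential {Sg A : Type} (𝒜 : URA Sg A) : Prop :=
  ∀ s : 𝒜.S, ∃ t ∈ 𝒜.T, t.1 = s

/-- `𝒜` is co-deterministic if for every terminal sequence and label there is
at most one transition bundle with that terminal sequence and label. -/
def URA.CoDeterministic {Sg A : Type} (𝒜 : URA Sg A) : Prop :=
  ∀ t ∈ 𝒜.T, ∀ t' ∈ 𝒜.T, t.2.1 = t'.2.1 → t.2.2 = t'.2.2 → t = t'

/-- `𝒜` is co-complete if for every terminal sequence and label there is at
least one transition bundle with that terminal sequence and label. -/
def URA.CoComplete {Sg A : Type} (𝒜 : URA Sg A) : Prop :=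
  ∀ (s : Sg → 𝒜.S) (a : A), ∃ t ∈ 𝒜.T, t.2.1 = a ∧ t.2.2 = s

/-- One step along a bundle path: some transition bundle has source `s` and
`σ`-terminal state `s'` for some `σ`. -/
def URA.Step {Sg A : Type} (𝒜 : URA Sg A) (s s' : 𝒜.S) : Prop :=
  ∃ t ∈ 𝒜.T, t.1 = s ∧ ∃ σ : Sg, t.2.2 σ = s'

/-- `𝒜` is strongly connected if any state can be joined to any other by a
bundle path (possibly empty). -/
def URA.StronglyConnected {Sg A : Type} (𝒜 : URA Sg A) : Prop :=
  ∀ s s' : 𝒜.S, Relation.ReflTransGen 𝒜.Step s s'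

/-- A tree shift `X` is irreducible if for all blocks `p ∈ X_n`, `q ∈ X_m`
there is `f ∈ X` with `f|_{Δ_n} = p` and, for every `w ∈ Σ^n`, some `v` with
`f|_{w v Δ_m} = w v · q`. -/
def IsIrreducibleShift {Sg A : Type} (X : Set (List Sg → A)) : Prop :=
  ∀ (n m : ℕ) (p q : List Sg → A),
    (∃ fp ∈ X, ∀ u : List Sg, u.length < n → fp u = p u) →
    (∃ fq ∈ X, ∀ u : List Sg, u.length < m → fq u = q u) →
    ∃ f ∈ X, (∀ u : List Sg, u.length < n → f u = p u) ∧
      ∀ w : List Sg, w.length = n → ∃ v : List Sg,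
        ∀ u : List Sg, u.length < m → f (w ++ v ++ u) = q u

/-- A subtree of `Σ*`: contains the root `ε` and is prefix-closed. -/
def IsSubtree {Sg : Type} (T : Set (List Sg)) : Prop :=
  ([] : List Sg) ∈ T ∧ ∀ u v : List Sg, u ++ v ∈ T → u ∈ T

/-- A full subtree: each vertex has either all of its children or none. -/
def IsFullSubtree {Sg : Type} (T : Set (List Sg)) : Prop :=
  IsSubtree T ∧ ∀ w ∈ T, (∀ σ : Sg, w ++ [σ] ∈ T) ∨ (∀ σ : Sg, w ++ [σ] ∉ T)

/-- `T⁺ = T ∪ {wσ : w ∈ T, σ ∈ Σ}`. -/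
def treePlus {Sg : Type} (T : Set (List Sg)) : Set (List Sg) :=
  T ∪ {x | ∃ w ∈ T, ∃ σ : Sg, x = w ++ [σ]}

/-- Acceptance of the full-tree-pattern `p : T → A` by the finite-tree
automaton `𝒜(I, F)` (initial states `I`, final state `F`). -/
def FTAccepts {Sg A : Type} (𝒜 : URA Sg A) (I : Set 𝒜.S) (F : 𝒜.S)
    (T : Set (List Sg)) (p : List Sg → A) : Prop :=
  ∃ α : List Sg → 𝒜.S,
    (∀ w ∈ T, (α w, p w, fun σ => α (w ++ [σ])) ∈ 𝒜.T) ∧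
    α [] ∈ I ∧
    ∀ w ∈ treePlus T, w ∉ T → α w = F

/-- A Rabin automaton: an unrestricted Rabin automaton together with a set of
initial states and a family of accepting sets. -/
structure RabinAutomaton (Sg A : Type) where
  toURA : URA Sg A
  I : Set toURA.S
  Acc : Set (Set toURA.S)

/-- Acceptance by a Rabin automaton: a homomorphism realizing `f`, starting at
an initial state, and such that along every right-infinite word, the set of
states visited infinitely often belongs to the family of accepting sets. -/
def RabinAccepts {Sg A : Type} (𝒜 : RabinAutomaton Sg A) (f : List Sg → A) : Prop :=
  ∃ α : List Sg → 𝒜.toURA.S,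
    (∀ w : List Sg, (α w, f w, fun σ => α (w ++ [σ])) ∈ 𝒜.toURA.T) ∧
    α [] ∈ 𝒜.I ∧
    ∀ ω : ℕ → Sg,
      {s : 𝒜.toURA.S | ∀ N : ℕ, ∃ n ≥ N, α ((List.range n).map ω) = s} ∈ 𝒜.Acc

/-! ### Auxiliary definitions and lemmas for the proof -/

namespace MinPres

variable {Sg A : Type}

/-- A (full) run of an automaton on a configuration. -/
def IsRun (B : URA Sg A) (f : List Sg → A) (α : List Sg → B.S) : Prop :=
  ∀ w : List Sg, (α w, f w, fun σ => α (w ++ [σ])) ∈ B.T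

/-- The set of roots of full runs on `f`. -/
def RootSet (B : URA Sg A) (f : List Sg → A) : Set B.S :=
  {c | ∃ α : List Sg → B.S, IsRun B f α ∧ α [] = c}

/-- The set of roots of partial runs of depth `n` on `f`. -/
def PRoots (B : URA Sg A) (n : ℕ) (f : List Sg → A) : Set B.S :=
  {c | ∃ α : List Sg → B.S,
    (∀ w : List Sg, w.length < n → (α w, f w, fun σ => α (w ++ [σ])) ∈ B.T) ∧ α [] = c}

lemma proots_congr {B : URA Sg A} {n : ℕ} {f f' : List Sg → A}
    (h : ∀ u : List Sg, u.length < n → f u = f' u) :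
    PRoots B n f = PRoots B n f' := by
  have key : ∀ (g g' : List Sg → A), (∀ u : List Sg, u.length < n → g u = g' u) →
      PRoots B n g ⊆ PRoots B n g' := by
    rintro g g' hgg c ⟨α, hα, hroot⟩
    exact ⟨α, fun w hw => (hgg w hw) ▸ hα w hw, hroot⟩
  exact le_antisymm (key f f' h) (key f' f (fun u hu => (h u hu).symm))

lemma proots_antitone {B : URA Sg A} {f : List Sg → A} {m n : ℕ} (h : m ≤ n) :
    PRoots B n f ⊆ PRoots B m f := by
  rintro c ⟨α, hα, hroot⟩
  exact ⟨α, fun w hw => hα w (lt_of_lt_of_le hw h), hroot⟩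

lemma rootSet_subset_proots {B : URA Sg A} {f : List Sg → A} (n : ℕ) :
    RootSet B f ⊆ PRoots B n f := by
  rintro c ⟨α, hα, hroot⟩
  exact ⟨α, fun w _ => hα w, hroot⟩

lemma rootSet_nonempty {B : URA Sg A} {f : List Sg → A} (hf : B.Accepts f) :
    (RootSet B f).Nonempty := by
  obtain ⟨α, hα⟩ := hf
  exact ⟨α [], α, hα, rfl⟩

/-- König-type compactness: if there are partial runs of every depth (with a
root constraint), then there is a full run. -/
lemma koenig [Finite Sg] (B : URA Sg A) (f : List Sg → A) (P : B.S → Prop)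
    (h : ∀ n : ℕ, ∃ α : List Sg → B.S, P (α []) ∧
      ∀ w : List Sg, w.length < n → (α w, f w, fun σ => α (w ++ [σ])) ∈ B.T) :
    ∃ α : List Sg → B.S, P (α []) ∧ IsRun B f α := by
  classical
  letI : TopologicalSpace B.S := ⊥
  haveI : DiscreteTopology B.S := ⟨rfl⟩
  set C : ℕ → Set (List Sg → B.S) := fun n =>
    {α | P (α []) ∧ ∀ w : List Sg, w.length < n →
      (α w, f w, fun σ => α (w ++ [σ])) ∈ B.T} with hC
  have hclosed : ∀ n, IsClosed (C n) := by
    intro n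
    have : C n = ((fun α : List Sg → B.S => α []) ⁻¹' {s | P s}) ∩
        ⋂ w : List Sg, {α : List Sg → B.S | w.length < n →
          (α w, f w, fun σ => α (w ++ [σ])) ∈ B.T} := by
      ext α
      simp [hC, Set.mem_iInter]
    rw [this]
    refine IsClosed.inter (IsClosed.preimage (continuous_apply ([] : List Sg))
      (isClosed_discrete _)) (isClosed_iInter fun w => ?_)
    by_cases hw : w.length < n
    · have : {α : List Sg → B.S | w.length < n →
          (α w, f w, fun σ => α (w ++ [σ])) ∈ B.T} =
          (fun α : List Sg → B.S => (α w, fun σ => α (w ++ [σ]))) ⁻¹'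
            {p : B.S × (Sg → B.S) | (p.1, f w, p.2) ∈ B.T} := by
        ext α; simp [hw]
      rw [this]
      exact IsClosed.preimage
        ((continuous_apply w).prodMk (continuous_pi fun σ => continuous_apply _))
        (isClosed_discrete _)
    · have : {α : List Sg → B.S | w.length < n →
          (α w, f w, fun σ => α (w ++ [σ])) ∈ B.T} = Set.univ := by
        ext α; simp [hw]
      rw [this]; exact isClosed_univ
  have hne : ∀ n, (C n).Nonempty := by
    intro n
    obtain ⟨α, h1, h2⟩ := h n
    exact ⟨α, h1, h2⟩
  have hdir : Directed (· ⊇ ·) C := by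
    intro m n
    refine ⟨max m n, fun α hα => ⟨hα.1, fun w hw => hα.2 w (lt_of_lt_of_le hw (le_max_left _ _))⟩,
      fun α hα => ⟨hα.1, fun w hw => hα.2 w (lt_of_lt_of_le hw (le_max_right _ _))⟩⟩
  have hcpt : ∀ n, IsCompact (C n) := fun n => (hclosed n).isCompact
  obtain ⟨α, hα⟩ := IsCompact.nonempty_iInter_of_directed_nonempty_isCompact_isClosed
    C hdir hne hcpt hclosed
  have hmem : ∀ n, α ∈ C n := fun n => Set.mem_iInter.1 hα n
  exact ⟨α, (hmem 0).1, fun w => (hmem (w.length + 1)).2 w (Nat.lt_succ_self _)⟩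

/-- Synchronization: some finite depth already determines the root set. -/
lemma sync [Finite Sg] (B : URA Sg A) (f : List Sg → A) :
    ∃ N : ℕ, PRoots B N f ⊆ RootSet B f := by
  classical
  haveI : Finite B.S := B.finS
  set g : ℕ → ℕ := fun n => (PRoots B n f).ncard with hgdef
  have hmono : ∀ {m n : ℕ}, m ≤ n → g n ≤ g m := by
    intro m n hmn
    exact Set.ncard_le_ncard (proots_antitone hmn) (Set.toFinite _)
  have hVne : (Set.range g).Nonempty := ⟨g 0, 0, rfl⟩
  obtain ⟨N, hN⟩ : ∃ N, g N = sInf (Set.range g) := Nat.sInf_mem hVne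
  have hstab : ∀ n, N ≤ n → PRoots B n f = PRoots B N f := by
    intro n hn
    refine Set.eq_of_subset_of_ncard_le (proots_antitone hn) ?_ (Set.toFinite _)
    rw [show (PRoots B n f).ncard = g n from rfl, show (PRoots B N f).ncard = g N from rfl, hN]
    exact Nat.sInf_le ⟨n, rfl⟩
  refine ⟨N, fun c hc => ?_⟩
  have hall : ∀ n, c ∈ PRoots B n f := by
    intro n
    rcases le_total n N with h | h
    · exact proots_antitone h hc
    · rw [hstab n h]; exact hc
  obtain ⟨α, h1, h2⟩ := koenig B f (fun s => s = c) (by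
    intro n
    obtain ⟨α, hα, hroot⟩ := hall n
    exact ⟨α, hroot, hα⟩)
  exact ⟨α, h2, h1⟩

lemma run_shift {B : URA Sg A} {f : List Sg → A} {α : List Sg → B.S}
    (hα : IsRun B f α) (u : List Sg) :
    IsRun B (shiftMap f u) (fun x => α (u ++ x)) := by
  intro w
  have := hα (u ++ w)
  simpa [shiftMap, List.append_assoc] using this

lemma run_reach {B : URA Sg A} {f : List Sg → A} {α : List Sg → B.S}
    (hα : IsRun B f α) (x u : List Sg) :
    Relation.ReflTransGen B.Step (α u) (α (u ++ x)) := by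
  induction x generalizing u with
  | nil => simpa using Relation.ReflTransGen.refl
  | cons σ x ih =>
    have hstep : B.Step (α u) (α (u ++ [σ])) :=
      ⟨(α u, f u, fun τ => α (u ++ [τ])), hα u, rfl, σ, rfl⟩
    have : u ++ σ :: x = (u ++ [σ]) ++ x := by simp
    rw [this]
    exact Relation.ReflTransGen.head hstep (ih (u ++ [σ]))

lemma deep_block_root {B : URA Sg A} {h f : List Sg → A} {γ : List Sg → B.S}
    (hγ : IsRun B h γ) (a b : List Sg) {m : ℕ}
    (hv : ∀ x : List Sg, x.length < m → h (a ++ b ++ x) = f x) :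
    γ (a ++ b) ∈ PRoots B m f := by
  refine ⟨fun x => γ (a ++ b ++ x), ?_, by simp⟩
  intro x hx
  have hb := hγ (a ++ b ++ x)
  have hfn : (fun σ => γ (a ++ b ++ x ++ [σ])) = fun σ => γ (a ++ b ++ (x ++ [σ])) := by
    funext σ; rw [List.append_assoc]
  rw [hv x hx, hfn] at hb
  exact hb

/-- The sub-automaton on a set of states. -/
def subURA (B : URA Sg A) (K : Set B.S) (hK : K.Nonempty) : URA Sg A where
  S := {s // s ∈ K}
  finS := have : Finite B.S := B.finS; inferInstance
  neS := hK.to_subtype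
  T := {t | (t.1.val, t.2.1, fun σ => (t.2.2 σ).val) ∈ B.T}

lemma subURA_codet {B : URA Sg A} {K : Set B.S} {hK : K.Nonempty}
    (hcd : B.CoDeterministic) : (subURA B K hK).CoDeterministic := by
  rintro ⟨s, a, c⟩ ht ⟨s', a', c'⟩ ht' hlab hterm
  simp only at hlab hterm
  subst hlab; subst hterm
  have := hcd _ ht _ ht' rfl rfl
  have hs : s = s' := Subtype.ext (congrArg (fun t : B.S × A × (Sg → B.S) => t.1) this)
  subst hs
  rfl

lemma subURA_shift_subset {B : URA Sg A} {K : Set B.S} {hK : K.Nonempty} :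
    (subURA B K hK).shift ⊆ B.shift := by
  rintro f ⟨α, hα⟩
  exact ⟨fun w => (α w).val, fun w => hα w⟩

/-- The one-state automaton with no transitions; it accepts nothing. -/
def emptyURA (Sg A : Type) : URA Sg A where
  S := PUnit
  finS := inferInstance
  neS := inferInstance
  T := ∅

end MinPres


/-- a minimal co-deterministic presentation of an irreducible
sofic tree shift is strongly connected. -/
theorem minimal_presentation_stronglyConnected {Sg A : Type} [Finite Sg]
    [Nonempty Sg] [Finite A] (𝒜 : URA Sg A) (hcd : 𝒜.CoDeterministic)
    (hirr : IsIrreducibleShift 𝒜.shift)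
    (hmin : ∀ 𝒜' : URA Sg A, 𝒜'.CoDeterministic → 𝒜'.shift = 𝒜.shift →
      Nat.card 𝒜.S ≤ Nat.card 𝒜'.S) :
    𝒜.StronglyConnected := by
  classical
  haveI : Finite 𝒜.S := 𝒜.finS
  haveI : Nonempty 𝒜.S := 𝒜.neS
  by_cases hXe : 𝒜.shift = ∅
  · -- the empty shift is accepted by a one-state automaton
    have h1 : Nat.card 𝒜.S ≤ 1 := by
      have hE := hmin (MinPres.emptyURA Sg A)
        (by rintro t ht; exact absurd ht (Set.notMem_empty _))
        (by
          rw [hXe]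
          ext f
          simp only [URA.shift, Set.mem_setOf_eq, Set.mem_empty_iff_false, iff_false]
          rintro ⟨α, hα⟩
          exact absurd (hα []) (Set.notMem_empty _))
      have hone : Nat.card (MinPres.emptyURA Sg A).S = 1 := by
        show Nat.card PUnit = 1
        simp
      omega
    have h2 : 0 < Nat.card 𝒜.S := Nat.card_pos
    have hcard1 : Nat.card 𝒜.S = 1 := le_antisymm h1 h2
    have hsub : Subsingleton 𝒜.S := (Nat.card_eq_one_iff_unique.mp hcard1).1
    intro s s'
    rw [Subsingleton.elim s s']
  · obtain ⟨g₀, hg₀⟩ : ∃ g, g ∈ 𝒜.shift := by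
      rcases Set.eq_empty_or_nonempty 𝒜.shift with h | h
      · exact absurd h hXe
      · exact h
    obtain ⟨σ₀⟩ := ‹Nonempty Sg›
    -- choose a configuration with root set of minimal cardinality
    set V : Set ℕ := {k | ∃ f ∈ 𝒜.shift, (MinPres.RootSet 𝒜 f).ncard = k} with hV
    have hVne : V.Nonempty := ⟨_, g₀, hg₀, rfl⟩
    obtain ⟨g, hg, hgcard⟩ : ∃ f ∈ 𝒜.shift, (MinPres.RootSet 𝒜 f).ncard = sInf V :=
      Nat.sInf_mem hVne
    obtain ⟨N, hN⟩ := MinPres.sync 𝒜 g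
    set R : Set 𝒜.S := MinPres.RootSet 𝒜 g with hR
    have hRne : R.Nonempty := MinPres.rootSet_nonempty hg
    -- any configuration carrying the synchronizing block of `g` on top has root set exactly `R`
    have fact5 : ∀ h ∈ 𝒜.shift, (∀ u : List Sg, u.length < N → h u = g u) →
        MinPres.RootSet 𝒜 h = R := by
      intro h hh hagree
      have hsub : MinPres.RootSet 𝒜 h ⊆ R := by
        refine subset_trans (MinPres.rootSet_subset_proots N) ?_
        rw [MinPres.proots_congr hagree]
        exact hN
      refine Set.eq_of_subset_of_ncard_le hsub ?_ (Set.toFinite _)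
      rw [hR, hgcard]
      exact Nat.sInf_le ⟨h, hh, rfl⟩
    -- every element of `R` reaches a root of every configuration of the shift
    have T2 : ∀ f ∈ 𝒜.shift, ∀ e ∈ R, ∃ d ∈ MinPres.RootSet 𝒜 f,
        Relation.ReflTransGen 𝒜.Step e d := by
      intro f hf e he
      obtain ⟨Nf, hNf⟩ := MinPres.sync 𝒜 f
      obtain ⟨h, hh, htop, hdeep⟩ := hirr N Nf g f ⟨g, hg, fun _ _ => rfl⟩ ⟨f, hf, fun _ _ => rfl⟩
      have he' : e ∈ MinPres.RootSet 𝒜 h := (fact5 h hh htop) ▸ he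
      obtain ⟨γ, hγ, hγroot⟩ := he'
      obtain ⟨v, hv⟩ := hdeep (List.replicate N σ₀) (List.length_replicate (n := N) (a := σ₀))
      have hd : γ (List.replicate N σ₀ ++ v) ∈ MinPres.PRoots 𝒜 Nf f :=
        MinPres.deep_block_root hγ (List.replicate N σ₀) v hv
      refine ⟨γ (List.replicate N σ₀ ++ v), hNf hd, ?_⟩
      have hreach := MinPres.run_reach hγ (List.replicate N σ₀ ++ v) []
      rw [hγroot] at hreach
      simpa using hreach
    -- every element of `R` reaches every state
    have fact2 : ∀ e ∈ R, ∀ s : 𝒜.S, Relation.ReflTransGen 𝒜.Step e s := by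
      intro e he
      set K : Set 𝒜.S := {s | Relation.ReflTransGen 𝒜.Step e s} with hK
      have hKne : K.Nonempty := ⟨e, Relation.ReflTransGen.refl⟩
      have hBshift : (MinPres.subURA 𝒜 K hKne).shift = 𝒜.shift := by
        apply Set.Subset.antisymm MinPres.subURA_shift_subset
        intro f hf
        obtain ⟨d, hd, hed⟩ := T2 f hf e he
        obtain ⟨γ, hγ, hγroot⟩ := hd
        have hmem : ∀ w : List Sg, γ w ∈ K := by
          intro w
          have h2 := MinPres.run_reach hγ w []
          rw [hγroot] at h2
          exact Relation.ReflTransGen.trans hed (by simpa using h2)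
        exact ⟨fun w => ⟨γ w, hmem w⟩, fun w => hγ w⟩
      have hcard := hmin _ (MinPres.subURA_codet hcd) hBshift
      have hKuniv : K = Set.univ := by
        by_contra hne
        have hlt : K.ncard < Nat.card 𝒜.S := by
          rw [← Set.ncard_univ]
          exact Set.ncard_lt_ncard (Set.ssubset_univ_iff.mpr hne) (Set.toFinite _)
        have hKcard : Nat.card (MinPres.subURA 𝒜 K hKne).S = K.ncard :=
          Nat.card_coe_set_eq K
        omega
      intro s
      show s ∈ K
      rw [hKuniv]
      trivial
    -- every state reaches some element of `R`
    have hMc : ∀ s : 𝒜.S, ∃ e ∈ R, Relation.ReflTransGen 𝒜.Step s e := by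
      set K : Set 𝒜.S := {s | ∃ e ∈ R, Relation.ReflTransGen 𝒜.Step s e} with hK
      obtain ⟨e₀, he₀⟩ := hRne
      have he₀K : e₀ ∈ K := ⟨e₀, he₀, Relation.ReflTransGen.refl⟩
      have hKne : K.Nonempty := ⟨e₀, he₀K⟩
      have hBshift : (MinPres.subURA 𝒜 K hKne).shift = 𝒜.shift := by
        apply Set.Subset.antisymm MinPres.subURA_shift_subset
        intro f hf
        have hpartial : ∀ n : ℕ, ∃ α : List Sg → (MinPres.subURA 𝒜 K hKne).S,
            (fun _ => True) (α []) ∧ ∀ w : List Sg, w.length < n →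
              (α w, f w, fun σ => α (w ++ [σ])) ∈ (MinPres.subURA 𝒜 K hKne).T := by
          intro n
          obtain ⟨h, hh, htop, hdeep⟩ :=
            hirr n N f g ⟨f, hf, fun _ _ => rfl⟩ ⟨g, hg, fun _ _ => rfl⟩
          obtain ⟨γ, hγ⟩ := hh
          have hK' : ∀ z : List Sg, z.length ≤ n → γ z ∈ K := by
            intro z hz
            set w : List Sg := z ++ List.replicate (n - z.length) σ₀ with hw
            have hwlen : w.length = n := by
              simp only [hw, List.length_append, List.length_replicate]
              omega
            obtain ⟨v, hv⟩ := hdeep w hwlen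
            have hroot : γ (w ++ v) ∈ MinPres.PRoots 𝒜 N g :=
              MinPres.deep_block_root hγ w v hv
            refine ⟨γ (w ++ v), hN hroot, ?_⟩
            have hsplit : w ++ v = z ++ (List.replicate (n - z.length) σ₀ ++ v) := by
              rw [hw, List.append_assoc]
            rw [hsplit]
            exact MinPres.run_reach hγ _ z
          refine ⟨fun z => if hz : γ z ∈ K then ⟨γ z, hz⟩ else ⟨e₀, he₀K⟩, trivial, ?_⟩
          intro z hz
          have h1 : γ z ∈ K := hK' z (le_of_lt hz)
          have h2 : ∀ σ, γ (z ++ [σ]) ∈ K := by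
            intro σ
            refine hK' _ ?_
            simp only [List.length_append, List.length_singleton]
            omega
          show ((if hz' : γ z ∈ K then (⟨γ z, hz'⟩ : K) else ⟨e₀, he₀K⟩).val, f z,
            fun σ => (if hz' : γ (z ++ [σ]) ∈ K then (⟨γ (z ++ [σ]), hz'⟩ : K)
              else ⟨e₀, he₀K⟩).val) ∈ 𝒜.T
          rw [dif_pos h1]
          have hfn : (fun σ => (if hz' : γ (z ++ [σ]) ∈ K then (⟨γ (z ++ [σ]), hz'⟩ : K)
              else ⟨e₀, he₀K⟩).val) = fun σ => γ (z ++ [σ]) := by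
            funext σ; rw [dif_pos (h2 σ)]
          rw [hfn, ← htop z hz]
          exact hγ z
        obtain ⟨α, -, hα⟩ := MinPres.koenig (MinPres.subURA 𝒜 K hKne) f (fun _ => True) hpartial
        exact ⟨α, hα⟩
      have hcard := hmin _ (MinPres.subURA_codet hcd) hBshift
      have hKuniv : K = Set.univ := by
        by_contra hne
        have hlt : K.ncard < Nat.card 𝒜.S := by
          rw [← Set.ncard_univ]
          exact Set.ncard_lt_ncard (Set.ssubset_univ_iff.mpr hne) (Set.toFinite _)
        have hKcard : Nat.card (MinPres.subURA 𝒜 K hKne).S = K.ncard :=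
          Nat.card_coe_set_eq K
        omega
      intro s
      have hs : s ∈ K := by rw [hKuniv]; trivial
      exact hs
    intro s s'
    obtain ⟨e, he, hse⟩ := hMc s
    exact Relation.ReflTransGen.trans hse (fact2 e he s')
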